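/- arXiv:1911.00385 — 3 statements merged into one kernel-verified Lean document; each statement's English description precedes it below -/
import Mathlib

section
/- For every ε, δ in the open interval (0,1), if the natural number n satisfies n > log(δ)/log(1-ε) - 1, then the probability (over n+1 i.i.d. samples from μ, each labeled by the target threshold, fed to the learning algorithm that returns the maximum positively-labeled example, or 0 if none) that the returned hypothesis h satisfies Error(h) ≤ ε is at least 1 - δ. -/
open MeasureTheory

noncomputable def Error (μ : Measure NNReal) (target h : NNReal) : ENNReal :=
  μ {x | (x ≤ h) ≠ (x ≤ target)}

noncomputable def labelSample (target : NNReal) {n : ℕ} (S : Fin (n + 1) → NNReal) :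
    Fin (n + 1) → NNReal × Bool :=
  fun i => (S i, decide (S i ≤ target))

noncomputable def chooseHyp {n : ℕ} (S : Fin (n + 1) → NNReal × Bool) : NNReal :=
  Finset.univ.sup fun i => if (S i).2 then (S i).1 else 0

lemma error_eq_Ioc (μ : Measure NNReal) (target h : NNReal) (hh : h ≤ target) :
    Error μ target h = μ (Set.Ioc h target) := by
  unfold Error
  congr 1
  ext x
  simp only [Set.mem_setOf_eq, Set.mem_Ioc, ne_eq, eq_iff_iff]
  constructor
  · intro hne
    rcases le_or_gt x h with hx | hx
    · exact absurd (iff_of_true hx (hx.trans hh)) hne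
    · refine ⟨hx, ?_⟩
      by_contra hxt
      exact hne (iff_of_false (not_le.mpr hx) hxt)
  · rintro ⟨h1, h2⟩ heq
    exact absurd (heq.mpr h2) (not_le.mpr h1)

lemma chooseHyp_eq {n : ℕ} (target : NNReal) (S : Fin (n + 1) → NNReal) :
    chooseHyp (labelSample target S)
      = Finset.univ.sup fun i => if S i ≤ target then S i else 0 := by
  simp [chooseHyp, labelSample]

lemma real_pow_le (ε δ : ℝ) (hε0 : 0 < ε) (hε1 : ε < 1) (hδ0 : 0 < δ)
    (n : ℕ) (hn : (n : ℝ) > Real.log δ / Real.log (1 - ε) - 1) :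
    (1 - ε) ^ (n + 1) ≤ δ := by
  have ha0 : (0:ℝ) < 1 - ε := by linarith
  have hlog : Real.log (1 - ε) < 0 := Real.log_neg ha0 (by linarith)
  have h1 : Real.log δ / Real.log (1 - ε) < (n : ℝ) + 1 := by linarith
  have h2 : ((n : ℝ) + 1) * Real.log (1 - ε) < Real.log δ :=
    (div_lt_iff_of_neg hlog).mp h1
  have h3 : Real.log ((1 - ε) ^ (n + 1)) < Real.log δ := by
    rw [Real.log_pow]
    push_cast
    linarith
  exact le_of_lt ((Real.log_lt_log_iff (pow_pos ha0 (n + 1)) hδ0).mp h3)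

theorem stump_choose_PAC (μ : Measure NNReal) [IsProbabilityMeasure μ] (target : NNReal)
    (ε δ : NNReal) (hε0 : 0 < ε) (hε1 : ε < 1) (hδ0 : 0 < δ) (hδ1 : δ < 1)
    (n : ℕ) (hn : (n : ℝ) > Real.log δ / Real.log (1 - (ε : ℝ)) - 1) :
    ((Measure.pi fun _ : Fin (n + 1) => μ).map
        (fun S => chooseHyp (labelSample target S)))
        {h : NNReal | Error μ target h ≤ (ε : ENNReal)} ≥ 1 - (δ : ENNReal) := by
  classical
  set μn := Measure.pi fun _ : Fin (n + 1) => μ with hμn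
  set g : (Fin (n + 1) → NNReal) → NNReal := fun S => chooseHyp (labelSample target S) with hg
  have hg_eq : ∀ S, g S = Finset.univ.sup fun i => if S i ≤ target then S i else 0 :=
    fun S => chooseHyp_eq target S
  have hg_meas : Measurable g := by
    have : ∀ i : Fin (n + 1), Measurable
        (fun S : Fin (n + 1) → NNReal => if S i ≤ target then S i else 0) := by
      intro i
      exact Measurable.ite (measurable_pi_apply i measurableSet_Iic) (measurable_pi_apply i)
        measurable_const
    have hne : (Finset.univ : Finset (Fin (n + 1))).Nonempty := Finset.univ_nonempty
    have hm : Measurable (Finset.univ.sup' hne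
        fun i (S : Fin (n+1) → NNReal) => if S i ≤ target then S i else 0) :=
      Finset.measurable_sup' hne (fun i _ => this i)
    have heq : g = Finset.univ.sup' hne
        (fun i (S : Fin (n+1) → NNReal) => if S i ≤ target then S i else 0) := by
      funext S
      rw [Finset.sup'_apply, hg_eq, Finset.sup'_eq_sup]
    rw [heq]
    exact hm
  have hg_le : ∀ S, g S ≤ target := by
    intro S
    rw [hg_eq]
    apply Finset.sup_le
    intro i _
    split
    · assumption
    · exact zero_le
  have hg_ge : ∀ S (i : Fin (n + 1)), S i ≤ target → S i ≤ g S := by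
    intro S i hi
    rw [hg_eq]
    have := Finset.le_sup (f := fun i => if S i ≤ target then S i else 0) (Finset.mem_univ i)
    simpa [hi] using this
  -- the set A and its infimum
  set A : Set NNReal := {t | μ (Set.Ioc t target) ≤ (ε : ENNReal)} with hA
  have hAne : A.Nonempty := ⟨target, by simp [hA]⟩
  have hAbdd : BddBelow A := ⟨0, fun t _ => (zero_le : 0 ≤ t)⟩
  set s : NNReal := sInf A with hs
  have hA_up : ∀ ⦃t t' : NNReal⦄, t ∈ A → t ≤ t' → t' ∈ A := by
    intro t t' ht htt'
    exact le_trans (measure_mono (Set.Ioc_subset_Ioc_left htt')) ht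
  -- s ∈ A
  obtain ⟨u, hu_anti, hu_tend, hu_mem⟩ := exists_seq_tendsto_sInf hAne hAbdd
  have hsA : s ∈ A := by
    have hU : Set.Ioc s target = ⋃ k, Set.Ioc (u k) target := by
      ext x
      simp only [Set.mem_Ioc, Set.mem_iUnion]
      constructor
      · rintro ⟨hx, hxt⟩
        obtain ⟨k, hk⟩ := (hu_tend.eventually_lt_const hx).exists
        exact ⟨k, hk, hxt⟩
      · rintro ⟨k, hk, hxt⟩
        exact ⟨lt_of_le_of_lt (csInf_le hAbdd (hu_mem k)) hk, hxt⟩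
    have hmono : Monotone fun k => Set.Ioc (u k) target := by
      intro a b hab
      exact Set.Ioc_subset_Ioc_left (hu_anti hab)
    have : μ (Set.Ioc s target) = ⨆ k, μ (Set.Ioc (u k) target) := by
      rw [hU, hmono.measure_iUnion]
    rw [hA, Set.mem_setOf_eq, this]
    exact iSup_le fun k => hu_mem k
  -- main step
  have key : ∀ E : Set (Fin (n + 1) → NNReal),
      (∀ S ∈ E, Error μ target (g S) ≤ (ε : ENNReal)) → μn E ≤ (μn.map g)
        {h : NNReal | Error μ target h ≤ (ε : ENNReal)} := by
    intro E hE
    calc μn E ≤ μn (g ⁻¹' {h | Error μ target h ≤ (ε : ENNReal)}) :=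
          measure_mono fun S hS => hE S hS
      _ ≤ (μn.map g) {h | Error μ target h ≤ (ε : ENNReal)} :=
          Measure.le_map_apply hg_meas.aemeasurable _
  rcases eq_or_lt_of_le (zero_le : 0 ≤ s) with hs0 | hs0
  · -- s = 0 : every hypothesis is good
    have h1 : (1 : ENNReal) ≤ (μn.map g) {h : NNReal | Error μ target h ≤ (ε : ENNReal)} := by
      have := key Set.univ (fun S _ => by
        rw [error_eq_Ioc μ target (g S) (hg_le S)]
        exact hA_up hsA (hs0 ▸ (zero_le : 0 ≤ g S)))
      rwa [measure_univ] at this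
    exact le_trans tsub_le_self h1
  · -- s > 0
    -- lower bound on μ (Icc s target)
    obtain ⟨v, hv_mono, hv_mem, hv_tend⟩ := exists_seq_strictMono_tendsto' hs0
    have hIcc : (ε : ENNReal) ≤ μ (Set.Icc s target) := by
      have hI : Set.Icc s target = ⋂ k, Set.Ioc (v k) target := by
        ext x
        simp only [Set.mem_Icc, Set.mem_iInter, Set.mem_Ioc]
        constructor
        · rintro ⟨hx, hxt⟩ k
          exact ⟨lt_of_lt_of_le (hv_mem k).2 hx, hxt⟩
        · intro hk
          refine ⟨?_, (hk 0).2⟩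
          by_contra hxs
          push_neg at hxs
          obtain ⟨k, hk'⟩ := (hv_tend.eventually_const_lt hxs).exists
          exact absurd (hk k).1 (not_lt.mpr hk'.le)
      have hanti : Antitone fun k => Set.Ioc (v k) target := by
        intro a b hab
        exact Set.Ioc_subset_Ioc_left (hv_mono.monotone hab)
      have heq : μ (Set.Icc s target) = ⨅ k, μ (Set.Ioc (v k) target) := by
        rw [hI, hanti.measure_iInter (fun k => measurableSet_Ioc.nullMeasurableSet)
          ⟨0, measure_ne_top μ _⟩]
      rw [heq]
      refine le_iInf fun k => ?_
      have hnotA : v k ∉ A := fun hmem =>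
        absurd (csInf_le hAbdd hmem) (not_le.mpr (hv_mem k).2)
      exact le_of_lt (lt_of_not_ge hnotA)
    -- bad set
    set B : Set (Fin (n + 1) → NNReal) :=
      Set.pi Set.univ (fun _ => (Set.Icc s target)ᶜ) with hB
    have hB_meas : MeasurableSet B :=
      MeasurableSet.univ_pi fun _ => measurableSet_Icc.compl
    have hB_le : μn B ≤ (δ : ENNReal) := by
      have h1 : μn B = (μ (Set.Icc s target)ᶜ) ^ (n + 1) := by
        rw [hμn, hB, Measure.pi_pi]
        simp
      have h2 : μ (Set.Icc s target)ᶜ ≤ 1 - (ε : ENNReal) := by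
        rw [prob_compl_eq_one_sub measurableSet_Icc]
        exact tsub_le_tsub_left hIcc 1
      have h3 : (1 - (ε : ENNReal)) ^ (n + 1) ≤ (δ : ENNReal) := by
        have hcoe : (1 : ENNReal) - (ε : ENNReal) = ((1 - ε : NNReal) : ENNReal) := by
          rw [ENNReal.coe_sub]
          rfl
        rw [hcoe, ← ENNReal.coe_pow, ENNReal.coe_le_coe, ← NNReal.coe_le_coe,
          NNReal.coe_pow, NNReal.coe_sub hε1.le]
        exact real_pow_le ε δ hε0 hε1 hδ0 n hn
      calc μn B = (μ (Set.Icc s target)ᶜ) ^ (n + 1) := h1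
        _ ≤ (1 - (ε : ENNReal)) ^ (n + 1) := pow_le_pow_left₀ zero_le h2 (n + 1)
        _ ≤ (δ : ENNReal) := h3
    have hgood : ∀ S ∈ Bᶜ, Error μ target (g S) ≤ (ε : ENNReal) := by
      intro S hS
      have : ∃ i, S i ∈ Set.Icc s target := by
        by_contra hno
        push_neg at hno
        exact hS (fun i _ => hno i)
      obtain ⟨i, his, hit⟩ := this
      rw [error_eq_Ioc μ target (g S) (hg_le S)]
      exact hA_up hsA (le_trans his (hg_ge S i hit))
    have hfinal : 1 - (δ : ENNReal) ≤ μn Bᶜ := by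
      rw [prob_compl_eq_one_sub hB_meas]
      exact tsub_le_tsub_left hB_le 1
    exact le_trans hfinal (key Bᶜ hgood)
end

section
/- If μ((0, target]) ≤ ε with ε > 0, then for every vector S of n+1 examples, the error of the hypothesis chosen from the labeled sample is at most ε: Error(choose(label_sample(target, S))) ≤ ε. -/
open MeasureTheory Set

theorem always_succeed (μ : Measure NNReal) [IsProbabilityMeasure μ] (target : NNReal)
    (ε : NNReal) (hε : 0 < ε) (n : ℕ) (h : μ (Ioc 0 target) ≤ (ε : ENNReal)) :
    ∀ S : Fin (n + 1) → NNReal,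
      Error μ target (chooseHyp (labelSample target S)) ≤ (ε : ENNReal) := by
  intro S
  set g := chooseHyp (labelSample target S) with hg
  have hgt : g ≤ target := by
    apply Finset.sup_le
    intro i _
    simp only [labelSample]
    by_cases hi : S i ≤ target
    · simp [hi]
    · simp [hi]
  have hsub : {x : NNReal | (x ≤ g) ≠ (x ≤ target)} ⊆ Ioc 0 target := by
    intro x hx
    simp only [mem_setOf_eq, ne_eq] at hx
    by_cases hxg : x ≤ g
    · exact absurd (by simp [hxg, hxg.trans hgt]) hx
    · have hxt : x ≤ target := by
        by_contra hxt
        exact hx (by simp [hxg, hxt])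
      exact ⟨lt_of_not_ge fun h0 => hxg (le_trans h0 (zero_le (a := g))), hxt⟩
  exact le_trans (measure_mono hsub) h
end

section
/- If μ((θ, target]) ≤ ε, then the set of sample vectors S (of length n+1) for which the error of choose(label_sample(target, S)) exceeds ε is contained in the set of sample vectors S for which every entry x of S satisfies (if x ≤ target then x else 0) < θ. -/
open MeasureTheory Set

theorem all_missed (μ : Measure NNReal) [IsProbabilityMeasure μ] (target : NNReal)
    (ε : NNReal) (θ : NNReal) (n : ℕ)
    (h : μ (Ioc θ target) ≤ (ε : ENNReal)) :
    {S : Fin (n + 1) → NNReal |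
        Error μ target (chooseHyp (labelSample target S)) > (ε : ENNReal)} ⊆
      {S : Fin (n + 1) → NNReal | ∀ i, (if S i ≤ target then S i else 0) < θ} := by
  intro S hS i
  by_contra hcon
  push_neg at hcon
  apply absurd hS
  simp only [mem_setOf_eq, not_lt]
  have hle : chooseHyp (labelSample target S) ≤ target := by
    apply Finset.sup_le
    intro j _
    simp only [labelSample]
    by_cases hj : S j ≤ target
    · simpa [hj] using hj
    · simp [hj]
  have hge : θ ≤ chooseHyp (labelSample target S) := by
    by_cases h1 : S i ≤ target
    · have h2 : θ ≤ S i := by simpa [h1] using hcon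
      refine h2.trans ?_
      have := Finset.le_sup (f := fun j => if (labelSample target S j).2
        then (labelSample target S j).1 else 0) (Finset.mem_univ i)
      simpa [chooseHyp, labelSample, h1] using this
    · have : θ ≤ 0 := by simpa [h1] using hcon
      exact this.trans zero_le
  calc Error μ target (chooseHyp (labelSample target S))
      ≤ μ (Ioc θ target) := by
        apply measure_mono
        intro x hx
        simp only [Error, mem_setOf_eq] at hx
        by_cases hx1 : x ≤ chooseHyp (labelSample target S)
        · exact absurd (by simp [hx1, hx1.trans hle]) hx
        · by_cases hx2 : x ≤ target
          · exact ⟨lt_of_le_of_lt hge (not_le.mp hx1), hx2⟩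
          · exact absurd (by simp [hx1, hx2]) hx
    _ ≤ (ε : ENNReal) := h
end
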